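/- With notation as in the previous statement: every cycle c in (W, ∂₀) of the form c = ∑_{i=0}^{N} ([w_i, u, i] + [z_i, v, i]), where w_i, z_i ∈ V, is homologous to [w₀, u, 0]; explicitly, if ∂₀ c = 0 then d z_N = 0, d z_{i−1} = w_i for 1 ≤ i ≤ N, and b = ∑_{i=0}^{N} [z_i, u, i+1] satisfies ∂₀ b + c = [w₀, u, 0]. -/

import Mathlib

/-- With `W` the free `Λ`-module on generators `[x, u, i]`, `[x, v, i]`
(`x` ranging over a basis of the finite-dimensional complex `(V, d)` over a
field `Λ` of characteristic 2, extended `Λ`-linearly in the first slot via the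
embeddings `emb s i`, with `u = true`, `v = false`), and differential
`d₀[x,u,i] = [dx,u,i] + [x,v,i-1]` (`[·,v,-1] = 0`), `d₀[x,v,i] = [dx,v,i]`:
every `d₀`-cycle `c = ∑_{i=0}^N ([w_i,u,i] + [z_i,v,i])` satisfies
`d z_N = 0`, `d z_{i-1} = w_i` for `1 ≤ i ≤ N`, and
`b = ∑_{i=0}^N [z_i, u, i+1]` satisfies `d₀ b + c = [w₀, u, 0]`;
in particular `c` is homologous to `[w₀, u, 0]`. -/
theorem cycle_homologous_to_u_level_zero
    {J : Type*} [Fintype J] [DecidableEq J]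
    {Λ : Type*} [Field Λ] [CharP Λ 2]
    (D : (J →₀ Λ) →ₗ[Λ] (J →₀ Λ))
    (emb : Bool → ℕ → ((J →₀ Λ) →ₗ[Λ] ((J × Bool × ℕ) →₀ Λ)))
    (hemb : ∀ (s : Bool) (i : ℕ) (j : J),
      emb s i (Finsupp.single j 1) = Finsupp.single (j, s, i) 1)
    (d0 : ((J × Bool × ℕ) →₀ Λ) →ₗ[Λ] ((J × Bool × ℕ) →₀ Λ))
    (hd0u : ∀ (i : ℕ) (x : J →₀ Λ), d0 (emb true i x) =
      emb true i (D x) + (if i = 0 then 0 else emb false (i - 1) x))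
    (hd0v : ∀ (i : ℕ) (x : J →₀ Λ), d0 (emb false i x) = emb false i (D x))
    (N : ℕ) (w z : ℕ → (J →₀ Λ))
    (hcycle : d0 (∑ i ∈ Finset.range (N + 1),
      (emb true i (w i) + emb false i (z i))) = 0) :
    D (z N) = 0 ∧
    (∀ i, 1 ≤ i → i ≤ N → D (z (i - 1)) = w i) ∧
    d0 (∑ i ∈ Finset.range (N + 1), emb true (i + 1) (z i)) +
      (∑ i ∈ Finset.range (N + 1), (emb true i (w i) + emb false i (z i))) =
      emb true 0 (w 0) := by
  -- characteristic 2
  have two : ∀ a : (J × Bool × ℕ) →₀ Λ, a + a = 0 := by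
    intro a
    rw [← two_smul Λ a, show ((2 : Λ) = 0) from CharP.cast_eq_zero Λ 2, zero_smul]
  have two' : ∀ a : J →₀ Λ, a + a = 0 := by
    intro a
    rw [← two_smul Λ a, show ((2 : Λ) = 0) from CharP.cast_eq_zero Λ 2, zero_smul]
  have hembs : ∀ (s : Bool) (i : ℕ) (j : J) (a : Λ),
      emb s i (Finsupp.single j a) = Finsupp.single (j, s, i) a := by
    intro s i j a
    rw [← Finsupp.smul_single_one j a, map_smul, hemb, Finsupp.smul_single_one]
  -- projections
  set P : Bool → ℕ → (((J × Bool × ℕ) →₀ Λ) →ₗ[Λ] (J →₀ Λ)) :=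
    fun s i => Finsupp.lcomapDomain (fun j => (j, s, i))
      (fun a b h => by simpa using congrArg Prod.fst h) with hP
  have hPemb : ∀ (s t : Bool) (i k : ℕ) (x : J →₀ Λ),
      P s i (emb t k x) = if t = s ∧ k = i then x else 0 := by
    intro s t i k x
    induction x using Finsupp.induction_linear with
    | zero => simp
    | add f g hf hg => rw [map_add, map_add, hf, hg]; split <;> simp
    | single j a =>
        rw [hembs]
        ext j'
        have h2 : (P s i (Finsupp.single (j, t, k) a)) j'
            = if t = s ∧ k = i ∧ j = j' then a else 0 := by
          simp only [hP, Finsupp.lcomapDomain, LinearMap.coe_mk, AddHom.coe_mk,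
            Finsupp.comapDomain_apply, Finsupp.single_apply, Prod.mk.injEq]
          aesop
        rw [h2]
        by_cases h1 : t = s ∧ k = i
        · rw [if_pos h1]
          simp [Finsupp.single_apply, h1]
        · rw [if_neg h1]
          simp only [Finsupp.coe_zero, Pi.zero_apply]
          rw [if_neg]; tauto
  -- expanded cycle equation
  have hc : ∑ i ∈ Finset.range (N + 1),
      (emb true i (D (w i)) + ((if i = 0 then 0 else emb false (i - 1) (w i))
        + emb false i (D (z i)))) = 0 := by
    refine Eq.trans ?_ hcycle
    rw [map_sum]
    exact (Finset.sum_congr rfl fun i _ => by rw [map_add, hd0u, hd0v, add_assoc]).symm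
  -- apply the projections P false k
  have key : ∀ k : ℕ,
      (if k + 1 ≤ N then w (k + 1) else 0) + (if k ≤ N then D (z k) else 0) = 0 := by
    intro k
    have h := congrArg (P false k) hc
    rw [map_sum, map_zero] at h
    have heach : ∀ i ∈ Finset.range (N + 1),
        P false k (emb true i (D (w i)) + ((if i = 0 then 0 else emb false (i - 1) (w i))
          + emb false i (D (z i))))
        = (if i = k + 1 then w i else 0) + (if i = k then D (z i) else 0) := by
      intro i _
      have e1 : ((true : Bool) = false ∧ i = k) = False := by simp
      have e2 : ((false : Bool) = false ∧ i = k) ↔ i = k := by simp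
      have e3 : ((false : Bool) = false ∧ i - 1 = k) ↔ i - 1 = k := by simp
      simp only [map_add, apply_ite (P false k), map_zero, hPemb, e1, if_false, e2, e3,
        eq_self_iff_true, true_and, zero_add]
      congr 1
      by_cases h0 : i = 0
      · rw [if_pos h0, if_neg (by omega)]
      · rw [if_neg h0]
        have e4 : (i - 1 = k) ↔ (i = k + 1) := by omega
        simp [e4]
    rw [Finset.sum_congr rfl heach, Finset.sum_add_distrib,
      Finset.sum_ite_eq' (Finset.range (N + 1)) (k + 1) w,
      Finset.sum_ite_eq' (Finset.range (N + 1)) k (fun i => D (z i))] at h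
    simpa [Finset.mem_range, Nat.lt_succ_iff] using h
  have hzN : D (z N) = 0 := by
    have h := key N
    rw [if_neg (by omega), if_pos le_rfl, zero_add] at h
    exact h
  have hwi : ∀ i, 1 ≤ i → i ≤ N → D (z (i - 1)) = w i := by
    intro i h1 hN
    have h := key (i - 1)
    have e1 : i - 1 + 1 = i := by omega
    rw [e1, if_pos hN, if_pos (by omega)] at h
    have h2 : w i + D (z (i - 1)) = w i + w i := by rw [h, two']
    exact add_left_cancel h2
  refine ⟨hzN, hwi, ?_⟩
  -- compute d0 b
  have hb : d0 (∑ i ∈ Finset.range (N + 1), emb true (i + 1) (z i))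
      = ∑ i ∈ Finset.range (N + 1), (emb true (i + 1) (D (z i)) + emb false i (z i)) := by
    rw [map_sum]
    refine Finset.sum_congr rfl fun i _ => ?_
    rw [hd0u]
    simp
  rw [hb]
  set A := ∑ i ∈ Finset.range (N + 1), emb true (i + 1) (D (z i)) with hA'
  set B := ∑ i ∈ Finset.range (N + 1), emb false i (z i) with hB'
  set C := ∑ i ∈ Finset.range (N + 1), emb true i (w i) with hC'
  have hsplit : ∑ i ∈ Finset.range (N + 1),
        (emb true (i + 1) (D (z i)) + emb false i (z i))
      + ∑ i ∈ Finset.range (N + 1), (emb true i (w i) + emb false i (z i))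
      = A + C := by
    rw [Finset.sum_add_distrib, Finset.sum_add_distrib, ← hA', ← hB', ← hC']
    calc (A + B) + (C + B) = (A + C) + (B + B) := by abel
      _ = A + C := by rw [two, add_zero]
  rw [hsplit]
  have hA : A = ∑ i ∈ Finset.range N, emb true (i + 1) (w (i + 1)) := by
    rw [hA', Finset.sum_range_succ, hzN, map_zero, add_zero]
    refine Finset.sum_congr rfl fun i hi => ?_
    rw [Finset.mem_range] at hi
    have h := hwi (i + 1) (by omega) (by omega)
    simp only [Nat.add_sub_cancel] at h
    rw [h]
  have hB : C = ∑ i ∈ Finset.range N, emb true (i + 1) (w (i + 1)) + emb true 0 (w 0) := by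
    rw [hC', Finset.sum_range_succ']
  rw [hA, hB, ← add_assoc, two, zero_add]
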